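/- Let S be an even positive integer and N_B, N_C even positive integers. Suppose R ∈ ℝ^{(S·N_B)×(S·N_C)} is real, block-circulant of order S with blocks r_k ∈ ℝ^{N_B×N_C} (R = Σ_{k=0}^{S−1} Ω_S^k ⊗ r_k), and centrosymmetric (R·J_{S·N_C} = J_{S·N_B}·R). For n = 0, …, S−1 define the Fourier blocks ν_n = Σ_{k=0}^{S−1} r_k · e^{−2πi·nk/S} ∈ ℂ^{N_B×N_C}. Then for every n: Re(ν_n) = r_0 + (−1)^n·r_{S/2} + Σ_{k=1}^{S/2−1} cos(2πnk/S)·(r_k + J_{N_B}·r_k·J_{N_C}) is centrosymmetric (Re(ν_n)·J_{N_C} = J_{N_B}·Re(ν_n)), and Im(ν_n) = Σ_{k=1}^{S/2−1} sin(2πnk/S)·(J_{N_B}·r_k·J_{N_C} − r_k) is skew-centrosymmetric (Im(ν_n)·J_{N_C} = −J_{N_B}·Im(ν_n)). -/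

import Mathlib

open Matrix Kronecker Finset Fin.NatCast

/-- The cyclic shift permutation matrix `Ω_n` with `(Ω_n)_{i,j} = 1` iff `j ≡ i+1 (mod n)`. -/
def cyclicShift (n : ℕ) : Matrix (Fin n) (Fin n) ℝ :=
  Matrix.of fun i j => if (j : ℕ) = ((i : ℕ) + 1) % n then 1 else 0

/-- The exchange matrix `J_n` with ones on the anti-diagonal and zeros elsewhere. -/
def exchMatrix (n : ℕ) : Matrix (Fin n) (Fin n) ℝ :=
  Matrix.of fun i j => if (i : ℕ) + (j : ℕ) = n - 1 then 1 else 0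

theorem finrev {n:ℕ}[NeZero n](x:Fin n): Fin.rev x = -1 - x := by
  rcases n with _|m
  · exact absurd rfl (NeZero.ne 0)
  apply eq_sub_of_add_eq
  ext
  have hx := x.isLt
  simp only [Fin.val_rev, Fin.add_def]
  rw [show m + 1 - (x.val + 1) + x.val = m by omega, Nat.mod_eq_of_lt (by omega)]
  rcases Nat.eq_zero_or_pos m with h|h
  · simp [h, Fin.neg_def]
  · simp only [Fin.neg_def, Fin.val_one']
    rw [Nat.one_mod_eq_one.mpr (by omega), Nat.mod_eq_of_lt (by omega)]; omega

theorem exch_apply {n:ℕ} (i j : Fin n) : exchMatrix n i j = if i = Fin.rev j then 1 else 0 := by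
  have hi := i.isLt
  have hj := j.isLt
  simp only [exchMatrix, Matrix.of_apply, Fin.ext_iff, Fin.val_rev]
  congr 1
  simp only [eq_iff_iff]
  omega

theorem mulJ {p q:ℕ} (M : Matrix (Fin p) (Fin q) ℝ) (a : Fin p) (b : Fin q) :
    (M * exchMatrix q) a b = M a (Fin.rev b) := by
  simp only [Matrix.mul_apply, exch_apply]
  rw [Finset.sum_eq_single (Fin.rev b)]
  · simp
  · intro c _ hc; rw [if_neg hc, mul_zero]
  · simp

theorem Jmul {p q:ℕ} (M : Matrix (Fin p) (Fin q) ℝ) (a : Fin p) (b : Fin q) :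
    (exchMatrix p * M) a b = M (Fin.rev a) b := by
  simp only [Matrix.mul_apply, exch_apply]
  rw [Finset.sum_eq_single (Fin.rev a)]
  · simp [Fin.rev_rev]
  · intro c _ hc; rw [if_neg, zero_mul]; intro h; exact hc (by rw [h, Fin.rev_rev])
  · simp [Fin.rev_rev]

theorem JJ {q:ℕ} : exchMatrix q * exchMatrix q = 1 := by
  ext a b
  rw [mulJ, exch_apply, Fin.rev_rev, Matrix.one_apply]


theorem pow_shift {S:ℕ} [NeZero S] (k : ℕ) (i j : Fin S) :
    (cyclicShift S ^ k) i j = if (j:ℕ) = ((i:ℕ) + k) % S then 1 else 0 := by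
  induction k generalizing j with
  | zero =>
    simp only [pow_zero, Matrix.one_apply, Nat.add_zero, Nat.mod_eq_of_lt i.isLt, Fin.ext_iff]
    exact if_congr eq_comm rfl rfl
  | succ k ih =>
    rw [pow_succ, Matrix.mul_apply]
    have hlt : ((i:ℕ) + k) % S < S := Nat.mod_lt _ (Nat.pos_of_ne_zero (NeZero.ne S))
    rw [Finset.sum_eq_single (⟨((i:ℕ) + k) % S, hlt⟩ : Fin S)]
    · rw [ih, if_pos rfl, one_mul]
      simp only [cyclicShift, Matrix.of_apply]
      rw [Nat.mod_add_mod, ← Nat.add_assoc]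
    · intro c _ hc
      rw [ih, if_neg, zero_mul]
      intro h; exact hc (Fin.ext h)
    · simp

theorem cond_iff {S:ℕ} [NeZero S] (i j k : Fin S) :
    ((j:ℕ) = ((i:ℕ) + (k:ℕ)) % S) ↔ k = j - i := by
  rw [show ((i:ℕ)+(k:ℕ))%S = ((i+k : Fin S):ℕ) from (Fin.val_add _ _).symm, ← Fin.ext_iff,
    eq_sub_iff_add_eq]
  exact ⟨fun h => by rw [h, add_comm], fun h => by rw [← h, add_comm]⟩

theorem R_entry {S N_B N_C : ℕ} [NeZero S] (r : Fin S → Matrix (Fin N_B) (Fin N_C) ℝ)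
    (i j : Fin S) (a : Fin N_B) (b : Fin N_C) :
    (∑ k : Fin S, (cyclicShift S ^ (k : ℕ)) ⊗ₖ r k) (i,a) (j,b) = r (j - i) a b := by
  simp only [Matrix.sum_apply, Matrix.kroneckerMap_apply, pow_shift, cond_iff]
  rw [Finset.sum_eq_single (j - i)]
  · rw [if_pos rfl, one_mul]
  · intro c _ hc; rw [if_neg hc, zero_mul]
  · simp

theorem mulJJ {S p q : ℕ} (M : Matrix (Fin S × Fin p) (Fin S × Fin q) ℝ)
    (x : Fin S × Fin p) (j : Fin S) (b : Fin q) :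
    (M * (exchMatrix S ⊗ₖ exchMatrix q)) x (j, b) = M x (Fin.rev j, Fin.rev b) := by
  rw [Matrix.mul_apply]
  rw [Finset.sum_eq_single ((Fin.rev j, Fin.rev b) : Fin S × Fin q)]
  · simp [Matrix.kroneckerMap_apply, exch_apply, Fin.rev_rev]
  · rintro ⟨c, d⟩ _ hy
    simp only [Matrix.kroneckerMap_apply, exch_apply]
    rcases eq_or_ne c (Fin.rev j) with h | h
    · rcases eq_or_ne d (Fin.rev b) with h2 | h2
      · exact absurd (Prod.ext h h2) hy
      · rw [if_neg h2, mul_zero, mul_zero]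
    · rw [if_neg h, zero_mul, mul_zero]
  · simp

theorem JJmul {S p q : ℕ} (M : Matrix (Fin S × Fin p) (Fin S × Fin q) ℝ)
    (i : Fin S) (a : Fin p) (y : Fin S × Fin q) :
    ((exchMatrix S ⊗ₖ exchMatrix p) * M) (i, a) y = M (Fin.rev i, Fin.rev a) y := by
  rw [Matrix.mul_apply]
  rw [Finset.sum_eq_single ((Fin.rev i, Fin.rev a) : Fin S × Fin p)]
  · simp [Matrix.kroneckerMap_apply, exch_apply, Fin.rev_rev]
  · rintro ⟨c, d⟩ _ hy
    simp only [Matrix.kroneckerMap_apply, exch_apply]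
    rcases eq_or_ne i (Fin.rev c) with h | h
    · rcases eq_or_ne a (Fin.rev d) with h2 | h2
      · exact absurd (show (c, d) = (Fin.rev i, Fin.rev a) by
            rw [h, h2, Fin.rev_rev, Fin.rev_rev]) hy
      · rw [if_neg h2, mul_zero, zero_mul]
    · rw [if_neg h, zero_mul, zero_mul]
  · simp [Fin.rev_rev]

theorem cosnat (n : ℕ) : Real.cos (n * Real.pi) = (-1 : ℝ) ^ n := by
  induction n with
  | zero => simp
  | succ k ih => push_cast; rw [add_mul, one_mul, Real.cos_add_pi, ih]; ring

theorem sum_split {M : Type*} [AddCommMonoid M] (m : ℕ) (hm : 0 < m) (f : ℕ → M) :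
    ∑ k ∈ Finset.range (2 * m), f k
      = f 0 + f m + ∑ k ∈ Finset.Ioo 0 m, (f k + f (2 * m - k)) := by
  have h3 : ∑ k ∈ Finset.Ico (m + 1) (2 * m), f k = ∑ k ∈ Finset.Ioo 0 m, f (2 * m - k) := by
    rw [Finset.Ico_add_one_left_eq_Ioo]
    refine Finset.sum_nbij' (fun k => 2 * m - k) (fun k => 2 * m - k) ?_ ?_ ?_ ?_ ?_ <;>
        intro a ha <;> simp only [Finset.mem_Ioo] at * <;> try omega
    congr 1
    omega
  rw [Finset.sum_add_distrib, Finset.range_eq_Ico,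
    ← Finset.sum_Ico_consecutive f (Nat.zero_le m) (by omega : m ≤ 2 * m),
    Finset.sum_eq_sum_Ico_succ_bot hm f, Finset.sum_eq_sum_Ico_succ_bot (by omega : m < 2 * m) f,
    Finset.Ico_add_one_left_eq_Ioo, h3]
  abel

/-- **Structure of the Fourier blocks of a block-circulant centrosymmetric matrix.**
If `R = Σ_k Ω_S^k ⊗ r_k` is block-circulant and centrosymmetric, then each Fourier block
`ν_n = Σ_k r_k·e^{−2πi·nk/S}` has a centrosymmetric real part
`Re(ν_n) = r_0 + (−1)^n·r_{S/2} + Σ_{k=1}^{S/2−1} cos(2πnk/S)·(r_k + J·r_k·J)` and a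
skew-centrosymmetric imaginary part
`Im(ν_n) = Σ_{k=1}^{S/2−1} sin(2πnk/S)·(J·r_k·J − r_k)`. -/
theorem fourier_blocks_centro_structure
    (S N_B N_C : ℕ) [NeZero S] (hSeven : Even S)
    (hNB : 0 < N_B) (hNC : 0 < N_C) (hNBeven : Even N_B) (hNCeven : Even N_C)
    (r : Fin S → Matrix (Fin N_B) (Fin N_C) ℝ)
    (R : Matrix (Fin S × Fin N_B) (Fin S × Fin N_C) ℝ)
    (hR : R = ∑ k : Fin S, (cyclicShift S ^ (k : ℕ)) ⊗ₖ r k)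
    (hcs : R * (exchMatrix S ⊗ₖ exchMatrix N_C) = (exchMatrix S ⊗ₖ exchMatrix N_B) * R)
    (ν : Fin S → Matrix (Fin N_B) (Fin N_C) ℂ)
    (hν : ∀ n : Fin S, ν n = ∑ k : Fin S,
      Complex.exp (-(2 * Real.pi * Complex.I * (n : ℕ) * (k : ℕ)) / S) •
        (r k).map (Complex.ofReal ·)) :
    ∀ n : Fin S,
      ((ν n).map Complex.re =
        r 0 + ((-1 : ℝ)) ^ (n : ℕ) • r ((S / 2 : ℕ) : Fin S) +
          ∑ k ∈ Finset.Ioo 0 (S / 2), Real.cos (2 * Real.pi * (n : ℕ) * k / S) •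
            (r ((k : ℕ) : Fin S) + exchMatrix N_B * r ((k : ℕ) : Fin S) * exchMatrix N_C)) ∧
      (ν n).map Complex.re * exchMatrix N_C = exchMatrix N_B * (ν n).map Complex.re ∧
      ((ν n).map Complex.im =
        ∑ k ∈ Finset.Ioo 0 (S / 2), Real.sin (2 * Real.pi * (n : ℕ) * k / S) •
          (exchMatrix N_B * r ((k : ℕ) : Fin S) * exchMatrix N_C - r ((k : ℕ) : Fin S))) ∧
      (ν n).map Complex.im * exchMatrix N_C = -(exchMatrix N_B * (ν n).map Complex.im) := by
  obtain ⟨m, hmm⟩ := hSeven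
  have hS0 : 0 < S := Nat.pos_of_ne_zero (NeZero.ne S)
  have hS2 : S = 2 * m := by omega
  have hm0 : 0 < m := by omega
  have hhalf : S / 2 = m := by omega
  have hblock : ∀ k : Fin S, r k * exchMatrix N_C = exchMatrix N_B * r (-k) := by
    intro k
    ext a b
    have h := congrFun (congrFun hcs (Fin.rev k, a)) (0, b)
    rw [mulJJ, JJmul, Fin.rev_rev, hR, R_entry, R_entry] at h
    rw [mulJ, Jmul]
    have e1 : Fin.rev (0 : Fin S) - Fin.rev k = k := by rw [finrev, finrev]; abel
    have e2 : (0 : Fin S) - k = -k := zero_sub k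
    rw [e1, e2] at h
    exact h
  have hneg : ∀ k : Fin S, r (-k) = exchMatrix N_B * r k * exchMatrix N_C := by
    intro k
    rw [Matrix.mul_assoc, hblock k, ← Matrix.mul_assoc, JJ, Matrix.one_mul]
  have hJJmul' : ∀ X : Matrix (Fin N_B) (Fin N_C) ℝ,
      (exchMatrix N_B * X * exchMatrix N_C) * exchMatrix N_C = exchMatrix N_B * X := by
    intro X; rw [Matrix.mul_assoc (exchMatrix N_B * X), JJ, Matrix.mul_one]
  have hJJmul'' : ∀ X : Matrix (Fin N_B) (Fin N_C) ℝ,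
      exchMatrix N_B * (exchMatrix N_B * X * exchMatrix N_C) = X * exchMatrix N_C := by
    intro X; rw [← Matrix.mul_assoc, ← Matrix.mul_assoc, JJ, Matrix.one_mul]
  have hSval : (S : ℝ) = 2 * (m : ℝ) := by rw [hS2]; push_cast; ring
  have hmne : (m : ℝ) ≠ 0 := Nat.cast_ne_zero.mpr (by omega)
  intro n
  have hexp : ∀ k : Fin S,
      Complex.exp (-(2 * (Real.pi : ℂ) * Complex.I * ((n : ℕ) : ℂ) * ((k : ℕ) : ℂ)) / (S : ℂ))
        = Complex.exp (((-(2 * Real.pi * (n : ℕ) * (k : ℕ) / S) : ℝ) : ℂ) * Complex.I) := by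
    intro k; congr 1; push_cast; ring
  have hre : (ν n).map Complex.re
      = ∑ k : Fin S, Real.cos (2 * Real.pi * (n : ℕ) * (k : ℕ) / S) • r k := by
    ext a b
    rw [hν n]
    simp only [Matrix.map_apply, Matrix.sum_apply, Matrix.smul_apply, smul_eq_mul,
      Complex.re_sum]
    refine Finset.sum_congr rfl fun k _ => ?_
    rw [hexp k]
    simp only [Complex.mul_re, Complex.exp_ofReal_mul_I_re, Complex.exp_ofReal_mul_I_im,
      Complex.ofReal_re, Complex.ofReal_im, mul_zero, sub_zero, Real.cos_neg]
  have him : (ν n).map Complex.im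
      = ∑ k : Fin S, (-Real.sin (2 * Real.pi * (n : ℕ) * (k : ℕ) / S)) • r k := by
    ext a b
    rw [hν n]
    simp only [Matrix.map_apply, Matrix.sum_apply, Matrix.smul_apply, smul_eq_mul,
      Complex.im_sum]
    refine Finset.sum_congr rfl fun k _ => ?_
    rw [hexp k]
    simp only [Complex.mul_im, Complex.exp_ofReal_mul_I_re, Complex.exp_ofReal_mul_I_im,
      Complex.ofReal_re, Complex.ofReal_im, mul_zero, zero_add, Real.sin_neg, neg_mul]
  have hrange : ∀ c : ℕ → ℝ, (∑ k : Fin S, c (k : ℕ) • r k)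
      = ∑ k ∈ Finset.range S, c k • r ((k : ℕ) : Fin S) := by
    intro c
    rw [← Fin.sum_univ_eq_sum_range (fun k => c k • r ((k : ℕ) : Fin S)) S]
    exact Finset.sum_congr rfl fun k _ => by rw [Fin.cast_val_eq_self]
  have hidx : ∀ k ∈ Finset.Ioo 0 m, ((2 * m - k : ℕ) : Fin S) = -((k : ℕ) : Fin S) := by
    intro k hk
    simp only [Finset.mem_Ioo] at hk
    have h1 : ((2 * m - k : ℕ) : Fin S).val = 2 * m - k := by
      rw [Fin.val_natCast]; exact Nat.mod_eq_of_lt (by omega)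
    have h2 : (-((k : ℕ) : Fin S)).val = (S - (k : ℕ) % S) % S := by
      rw [Fin.neg_def, Fin.val_natCast]
    ext
    rw [h1, h2, Nat.mod_eq_of_lt (show k < S by omega),
      Nat.mod_eq_of_lt (show S - k < S by omega)]
    omega
  have harg : ∀ k ∈ Finset.Ioo 0 m,
      (2 * Real.pi * (n : ℕ) * ((2 * m - k : ℕ) : ℝ) / S)
        = (n : ℕ) * (2 * Real.pi) - 2 * Real.pi * (n : ℕ) * (k : ℕ) / S := by
    intro k hk
    simp only [Finset.mem_Ioo] at hk
    rw [Nat.cast_sub (by omega : k ≤ 2 * m), hSval]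
    push_cast
    field_simp
  have hargm : (2 * Real.pi * (n : ℕ) * ((m : ℕ) : ℝ) / S) = (n : ℕ) * Real.pi := by
    rw [hSval]; field_simp
  have hmain_re : (ν n).map Complex.re =
      r 0 + ((-1 : ℝ)) ^ (n : ℕ) • r ((S / 2 : ℕ) : Fin S) +
        ∑ k ∈ Finset.Ioo 0 (S / 2), Real.cos (2 * Real.pi * (n : ℕ) * k / S) •
          (r ((k : ℕ) : Fin S) + exchMatrix N_B * r ((k : ℕ) : Fin S) * exchMatrix N_C) := by
    rw [hre, hrange (fun k => Real.cos (2 * Real.pi * (n : ℕ) * k / S)), hhalf]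
    rw [show Finset.range S = Finset.range (2 * m) from by rw [hS2]]
    rw [sum_split m hm0 (fun k => Real.cos (2 * Real.pi * (n : ℕ) * k / S) • r ((k : ℕ) : Fin S))]
    congr 1
    · congr 1
      · norm_num
      · rw [hargm, cosnat]
    · refine Finset.sum_congr rfl fun k hk => ?_
      rw [harg k hk, Real.cos_nat_mul_two_pi_sub, hidx k hk, hneg, ← smul_add]
  have hmain_im : (ν n).map Complex.im =
      ∑ k ∈ Finset.Ioo 0 (S / 2), Real.sin (2 * Real.pi * (n : ℕ) * k / S) •
        (exchMatrix N_B * r ((k : ℕ) : Fin S) * exchMatrix N_C - r ((k : ℕ) : Fin S)) := by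
    rw [him, hrange (fun k => -Real.sin (2 * Real.pi * (n : ℕ) * k / S)), hhalf]
    rw [show Finset.range S = Finset.range (2 * m) from by rw [hS2]]
    rw [sum_split m hm0 (fun k => -Real.sin (2 * Real.pi * (n : ℕ) * k / S) • r ((k : ℕ) : Fin S))]
    rw [show (-Real.sin (2 * Real.pi * (n : ℕ) * ((0 : ℕ) : ℝ) / S)) • r (((0 : ℕ) : ℕ) : Fin S)
        = 0 from by norm_num]
    rw [show (-Real.sin (2 * Real.pi * (n : ℕ) * ((m : ℕ) : ℝ) / S)) • r (((m : ℕ) : ℕ) : Fin S)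
        = 0 from by rw [hargm, Real.sin_nat_mul_pi]; simp]
    rw [zero_add, zero_add]
    refine Finset.sum_congr rfl fun k hk => ?_
    rw [harg k hk, Real.sin_nat_mul_two_pi_sub, neg_neg, hidx k hk, hneg, smul_sub, neg_smul]
    abel
  have c0 : r 0 * exchMatrix N_C = exchMatrix N_B * r 0 := by
    have := hblock 0; rwa [neg_zero] at this
  have cm : r ((S / 2 : ℕ) : Fin S) * exchMatrix N_C
      = exchMatrix N_B * r ((S / 2 : ℕ) : Fin S) := by
    have hmneg : -(((S / 2 : ℕ)) : Fin S) = (((S / 2 : ℕ)) : Fin S) := by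
      rw [hhalf]
      have hv : (((m : ℕ)) : Fin S).val = m := by
        rw [Fin.val_natCast]; exact Nat.mod_eq_of_lt (by omega)
      have h2 : (-(((m : ℕ)) : Fin S)).val = (S - m % S) % S := by
        rw [Fin.neg_def, Fin.val_natCast]
      ext
      rw [h2, hv, Nat.mod_eq_of_lt (show m < S by omega),
        show S - m = m from by omega, Nat.mod_eq_of_lt (show m < S by omega)]
    have := hblock (((S / 2 : ℕ)) : Fin S)
    rwa [hmneg] at this
  refine ⟨hmain_re, ?_, hmain_im, ?_⟩
  · rw [hmain_re]
    simp only [Matrix.add_mul, Matrix.mul_add, Matrix.sum_mul, Matrix.mul_sum,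
      Matrix.smul_mul, Matrix.mul_smul, c0, cm]
    congr 1
    refine Finset.sum_congr rfl fun k hk => ?_
    congr 1
    rw [hJJmul', hJJmul'']
    exact add_comm _ _
  · rw [hmain_im, Matrix.sum_mul, Matrix.mul_sum, ← Finset.sum_neg_distrib]
    refine Finset.sum_congr rfl fun k hk => ?_
    rw [Matrix.smul_mul, Matrix.mul_smul, ← smul_neg]
    congr 1
    rw [Matrix.sub_mul, Matrix.mul_sub, hJJmul', hJJmul'', neg_sub]
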